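/- Let q be a prime power and S a set of q+1 points in PG(2,q). The number of lines disjoint from S equals 0 if and only if S is the set of points of a line of PG(2,q). -/

import Mathlib

/-- The projective plane `PG(2,q)`: points are 1-dimensional subspaces of `F³`. -/
abbrev PG (F : Type*) [Field F] := Projectivization F (Fin 3 → F)

/-- Incidence between a point and a line of `PG(2,q)` (lines given by dual coordinates):
`a·x + b·y + c·z = 0`. -/
def PGIncident {F : Type*} [Field F] (p l : PG F) : Prop :=
  ∑ j : Fin 3, p.rep j * l.rep j = 0

namespace PGAux

open Projectivization Module

variable {F : Type*} [Field F]

instance [Fintype F] : Finite (PG F) := Quotient.finite _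

/-- cross product -/
def cp (x y : Fin 3 → F) : Fin 3 → F :=
  ![x 1 * y 2 - x 2 * y 1, x 2 * y 0 - x 0 * y 2, x 0 * y 1 - x 1 * y 0]

lemma dot_cp_left (x y : Fin 3 → F) : ∑ j, x j * cp x y j = 0 := by
  simp [cp, Fin.sum_univ_three]; ring

lemma dot_cp_right (x y : Fin 3 → F) : ∑ j, y j * cp x y j = 0 := by
  simp [cp, Fin.sum_univ_three]; ring

lemma triple (z v w : Fin 3 → F) :
    cp z (cp v w) = (∑ j, z j * w j) • v - (∑ j, z j * v j) • w := by
  funext i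
  fin_cases i <;>
    simp [cp, Fin.sum_univ_three, Pi.smul_apply, smul_eq_mul] <;> ring

lemma cp_eq_zero {x y : Fin 3 → F} (h : cp x y = 0) :
    x = 0 ∨ ∃ c : F, y = c • x := by
  by_cases hx : x = 0
  · exact Or.inl hx
  right
  have h0 := congrFun h 0
  have h1 := congrFun h 1
  have h2 := congrFun h 2
  simp [cp] at h0 h1 h2
  have key : ∀ i j, x i * y j - x j * y i = 0 := by
    intro i j
    fin_cases i <;> fin_cases j <;> simp <;>
      first
      | ring1
      | linear_combination h0
      | linear_combination -h0
      | linear_combination h1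
      | linear_combination -h1
      | linear_combination h2
      | linear_combination -h2
  obtain ⟨i, hi⟩ : ∃ i, x i ≠ 0 := by
    by_contra hc
    push_neg at hc
    exact hx (funext hc)
  refine ⟨y i * (x i)⁻¹, funext fun j => ?_⟩
  have := key i j
  rw [Pi.smul_apply, smul_eq_mul, mul_comm (y i), mul_assoc, eq_inv_mul_iff_mul_eq₀ hi]
  linear_combination this

lemma incident_mk_iff (v w : Fin 3 → F) (hv : v ≠ 0) (hw : w ≠ 0) :
    PGIncident (mk F v hv) (mk F w hw) ↔ ∑ j, v j * w j = 0 := by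
  obtain ⟨a, ha⟩ := exists_smul_eq_mk_rep F v hv
  obtain ⟨b, hb⟩ := exists_smul_eq_mk_rep F w hw
  unfold PGIncident
  rw [← ha, ← hb]
  have : ∀ j, (a • v) j * (b • w) j = (a * b : F) * (v j * w j) := by
    intro j
    simp [Pi.smul_apply, Units.smul_def]
    ring
  rw [Finset.sum_congr rfl fun j _ => this j, ← Finset.mul_sum]
  constructor
  · intro h
    rcases mul_eq_zero.1 h with h | h
    · exact absurd h (by simp [Units.ne_zero])
    · exact h
  · intro h; rw [h, mul_zero]

lemma incident_symm {p l : PG F} (h : PGIncident p l) : PGIncident l p := by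
  unfold PGIncident at *
  simpa [mul_comm] using h

lemma dot_rep_eq_zero {p l : PG F} (h : PGIncident p l) :
    ∑ j, p.rep j * l.rep j = 0 := h

/-- two distinct points are not proportional -/
lemma rep_indep {p q : PG F} (h : p ≠ q) (c : F) : q.rep ≠ c • p.rep := by
  intro hc
  have hc0 : c ≠ 0 := by
    intro h0
    exact q.rep_nonzero (by simp [hc, h0])
  apply h
  rw [← p.mk_rep, ← q.mk_rep]
  rw [mk_eq_mk_iff' F _ _ p.rep_nonzero q.rep_nonzero]
  exact ⟨c⁻¹, by rw [hc]; simp [smul_smul, inv_mul_cancel₀ hc0]⟩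

lemma cp_rep_ne_zero {p q : PG F} (h : p ≠ q) : cp p.rep q.rep ≠ 0 := by
  intro hc
  rcases cp_eq_zero hc with h0 | ⟨c, hcc⟩
  · exact p.rep_nonzero h0
  · exact rep_indep h c hcc

lemma incident_rep_mk (p : PG F) {w : Fin 3 → F} (hw : w ≠ 0) :
    PGIncident p (mk F w hw) ↔ ∑ j, p.rep j * w j = 0 := by
  conv_lhs => rw [← p.mk_rep]
  exact incident_mk_iff _ _ _ _

lemma exists_line {p q : PG F} (h : p ≠ q) :
    ∃ l : PG F, PGIncident p l ∧ PGIncident q l := by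
  refine ⟨mk F (cp p.rep q.rep) (cp_rep_ne_zero h), ?_, ?_⟩
  · exact (incident_rep_mk p (cp_rep_ne_zero h)).2 (dot_cp_left _ _)
  · exact (incident_rep_mk q (cp_rep_ne_zero h)).2 (dot_cp_right _ _)

lemma unique_line {p q : PG F} (h : p ≠ q) {l m : PG F}
    (hpl : PGIncident p l) (hql : PGIncident q l)
    (hpm : PGIncident p m) (hqm : PGIncident q m) : l = m := by
  set v := p.rep with hv
  set w := q.rep with hw
  have hcvw : cp v w ≠ 0 := cp_rep_ne_zero h
  have key : ∀ z : PG F, PGIncident p z → PGIncident q z →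
      ∃ c : F, c ≠ 0 ∧ cp v w = c • z.rep := by
    intro z hpz hqz
    have h1 : ∑ j, z.rep j * w j = 0 := by
      have := dot_rep_eq_zero (incident_symm hqz)
      simpa [hw] using this
    have h2 : ∑ j, z.rep j * v j = 0 := by
      have := dot_rep_eq_zero (incident_symm hpz)
      simpa [hv] using this
    have ht : cp z.rep (cp v w) = 0 := by
      rw [triple, h1, h2]
      simp
    rcases cp_eq_zero ht with h0 | ⟨c, hc⟩
    · exact absurd h0 z.rep_nonzero
    · refine ⟨c, ?_, hc⟩
      intro h0
      exact hcvw (by simp [hc, h0])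
  obtain ⟨c, hc0, hc⟩ := key l hpl hql
  obtain ⟨d, hd0, hd⟩ := key m hpm hqm
  rw [← l.mk_rep, ← m.mk_rep]
  rw [mk_eq_mk_iff' F _ _ l.rep_nonzero m.rep_nonzero]
  refine ⟨c⁻¹ * d, ?_⟩
  have : c • l.rep = d • m.rep := by rw [← hc, ← hd]
  rw [mul_smul, ← this, smul_smul, inv_mul_cancel₀ hc0, one_smul]


def dotL (w : Fin 3 → F) : (Fin 3 → F) →ₗ[F] F where
  toFun v := ∑ j, v j * w j
  map_add' x y := by
    simp [add_mul, Finset.sum_add_distrib]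
  map_smul' c x := by
    simp [Finset.mul_sum, mul_assoc, smul_eq_mul]

lemma card_ne (α : Type*) [Finite α] (a : α) :
    Nat.card {x : α // x ≠ a} = Nat.card α - 1 := by
  classical
  have : Fintype α := Fintype.ofFinite α
  rw [Nat.card_eq_fintype_card, Nat.card_eq_fintype_card]
  have : Fintype.card {x : α // ¬ x = a} = Fintype.card α - Fintype.card {x : α // x = a} :=
    Fintype.card_subtype_compl _
  simpa [Fintype.card_subtype_eq] using this

variable [Fintype F]

lemma card_projSub (W : Submodule F (Fin 3 → F)) :
    Nat.card {p : PG F // p.rep ∈ W} * (Fintype.card F - 1) = Nat.card W - 1 := by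
  classical
  set T := {p : PG F // p.rep ∈ W} with hT
  have hmem : ∀ (v : Fin 3 → F) (hv : v ≠ 0), v ∈ W → (mk F v hv).rep ∈ W := by
    intro v hv hvW
    obtain ⟨a, ha⟩ := exists_smul_eq_mk_rep F v hv
    rw [← ha]
    exact W.smul_mem _ hvW
  let φ : {v : W // v ≠ 0} → T := fun v =>
    ⟨mk F (v.1 : Fin 3 → F) (by simpa using v.2), hmem _ _ v.1.2⟩
  have hfib : ∀ p : T, Function.Bijective
      (fun a : Fˣ => (⟨⟨⟨(a : F) • p.1.rep, W.smul_mem _ p.2⟩,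
        by
          simp only [ne_eq, Submodule.mk_eq_zero]
          exact smul_ne_zero a.ne_zero p.1.rep_nonzero⟩,
        by
          apply Subtype.ext
          show mk F ((a : F) • p.1.rep) _ = p.1
          conv_rhs => rw [← p.1.mk_rep]
          rw [mk_eq_mk_iff']
          exact ⟨(a : F), rfl⟩⟩ : {v : {v : W // v ≠ 0} // φ v = p})) := by
    intro p
    constructor
    · intro a b hab
      have h1 : ((a : F) • p.1.rep) = ((b : F) • p.1.rep) := by
        have := congrArg (fun x => ((x.1.1 : Fin 3 → F)) ) hab
        simpa using this
      have : ((a : F) - b) • p.1.rep = 0 := by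
        rw [sub_smul, h1, sub_self]
      rcases smul_eq_zero.1 this with h | h
      · exact Units.ext (sub_eq_zero.1 h)
      · exact absurd h p.1.rep_nonzero
    · rintro ⟨⟨⟨v, hvW⟩, hv0⟩, hφ⟩
      have hv0' : v ≠ 0 := by simpa [Submodule.mk_eq_zero] using hv0
      have : mk F v hv0' = p.1 := congrArg Subtype.val hφ
      rw [← p.1.mk_rep, mk_eq_mk_iff F _ _ hv0' p.1.rep_nonzero] at this
      obtain ⟨a, ha⟩ := this
      refine ⟨a, ?_⟩
      apply Subtype.ext
      apply Subtype.ext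
      apply Subtype.ext
      show (a : F) • p.1.rep = v
      rw [← ha]
      simp [Units.smul_def]
  have e : {v : W // v ≠ 0} ≃ T × Fˣ :=
    ((Equiv.sigmaFiberEquiv φ).symm.trans
      (Equiv.sigmaCongrRight fun p => (Equiv.ofBijective _ (hfib p)).symm)).trans
      (Equiv.sigmaEquivProd T Fˣ)
  have hcard := Nat.card_congr e
  rw [Nat.card_prod, card_ne] at hcard
  have hu : Nat.card Fˣ = Fintype.card F - 1 := by
    rw [Nat.card_units, Nat.card_eq_fintype_card]
  rw [hu] at hcard
  exact hcard.symm

lemma card_orth (w : Fin 3 → F) (hw : w ≠ 0) :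
    Nat.card {p : PG F // ∑ j, p.rep j * w j = 0} = Fintype.card F + 1 := by
  classical
  obtain ⟨j, hj⟩ : ∃ j, w j ≠ 0 := by
    by_contra hc
    push_neg at hc
    exact hw (funext hc)
  have hsurj : Function.Surjective (dotL w) := by
    intro c
    refine ⟨fun k => if k = j then c * (w j)⁻¹ else 0, ?_⟩
    show ∑ k, (if k = j then c * (w j)⁻¹ else 0) * w k = c
    rw [Finset.sum_eq_single j]
    · rw [if_pos rfl]
      field_simp
    · intro k _ hk
      simp [hk]
    · simp
  have hrank : finrank F (LinearMap.ker (dotL w)) = 2 := by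
    have h1 := LinearMap.finrank_range_add_finrank_ker (dotL w)
    rw [LinearMap.range_eq_top.2 hsurj, finrank_top, finrank_self,
      Module.finrank_fin_fun] at h1
    omega
  set W := LinearMap.ker (dotL w) with hW
  have hcW : Nat.card W = Fintype.card F ^ 2 := by
    have : Fintype W := Fintype.ofFinite _
    rw [Nat.card_eq_fintype_card, card_eq_pow_finrank (K := F), hrank]
  have e : {p : PG F // ∑ j, p.rep j * w j = 0} ≃ {p : PG F // p.rep ∈ W} :=
    Equiv.subtypeEquivRight fun p => by
      rw [hW, LinearMap.mem_ker]
      exact Iff.rfl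
  rw [Nat.card_congr e]
  have hmain := card_projSub W
  rw [hcW] at hmain
  obtain ⟨k, hk⟩ : ∃ k, Fintype.card F = k + 2 := by
    have := Fintype.one_lt_card (α := F)
    exact ⟨Fintype.card F - 2, by omega⟩
  rw [hk] at hmain ⊢
  have hq2 : (k + 2) ^ 2 - 1 = (k + 3) * (k + 1) := by
    apply Nat.sub_eq_of_eq_add
    ring
  rw [hq2] at hmain
  have h21 : k + 2 - 1 = k + 1 := by omega
  rw [h21] at hmain
  have hN := Nat.eq_of_mul_eq_mul_right (Nat.succ_pos k) hmain
  omega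


lemma card_points_on [Fintype F] (l : PG F) :
    Nat.card {p : PG F // PGIncident p l} = Fintype.card F + 1 := by
  have e : {p : PG F // PGIncident p l} ≃ {p : PG F // ∑ j, p.rep j * l.rep j = 0} :=
    Equiv.subtypeEquivRight fun p => Iff.rfl
  rw [Nat.card_congr e, card_orth _ l.rep_nonzero]

lemma card_lines_through [Fintype F] (C : PG F) :
    Nat.card {l : PG F // PGIncident C l} = Fintype.card F + 1 := by
  have e : {l : PG F // PGIncident C l} ≃ {l : PG F // ∑ j, l.rep j * C.rep j = 0} :=
    Equiv.subtypeEquivRight fun l => by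
      unfold PGIncident
      constructor <;> intro h <;>
        · rw [← h]
          exact Finset.sum_congr rfl fun j _ => mul_comm _ _
  rw [Nat.card_congr e, card_orth _ C.rep_nonzero]

end PGAux

/-- The number `u_i(S)` of lines of `PG(2,q)` meeting the point set `S` in exactly `i` points. -/
noncomputable def uIdx {F : Type*} [Field F] (S : Set (PG F)) (i : ℕ) : ℕ :=
  Nat.card {l : PG F // Nat.card {p : PG F // p ∈ S ∧ PGIncident p l} = i}

/-- for a `(q+1)`-set `S` in `PG(2,q)`, the number of lines disjoint from
`S` is `0` if and only if `S` is the point set of a line of `PG(2,q)`. -/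
theorem stmt5 (F : Type*) [Field F] [Fintype F] (S : Set (PG F))
    (hS : Nat.card S = Fintype.card F + 1) :
    uIdx S 0 = 0 ↔ ∃ l : PG F, S = {p : PG F | PGIncident p l} := by
  classical
  have hq2 : 1 < Fintype.card F := Fintype.one_lt_card
  set q := Fintype.card F with hq
  constructor
  · intro h0
    have hmeet : ∀ l : PG F, ∃ p, p ∈ S ∧ PGIncident p l := by
      intro l
      by_contra hc
      push_neg at hc
      have hempty : Nat.card {p : PG F // p ∈ S ∧ PGIncident p l} = 0 := by
        rw [Nat.card_eq_zero]
        exact Or.inl ⟨fun x => hc x.1 x.2.1 x.2.2⟩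
      have hne : Nonempty {l' : PG F // Nat.card {p : PG F // p ∈ S ∧ PGIncident p l'} = 0} :=
        ⟨⟨l, hempty⟩⟩
      unfold uIdx at h0
      rcases Nat.card_eq_zero.1 h0 with hE | hI
      · exact hE.elim hne.some
      · exact not_infinite_iff_finite.2 inferInstance hI
    have hS' : S.ncard = q + 1 := by rw [← Nat.card_coe_set_eq, hS]
    obtain ⟨A, hA, B, hB, hAB⟩ := (Set.one_lt_ncard S.toFinite).1 (by omega)
    obtain ⟨ℓ, hAℓ, hBℓ⟩ := PGAux.exists_line hAB
    by_cases hsub : {p : PG F | PGIncident p ℓ} ⊆ S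
    · refine ⟨ℓ, ?_⟩
      have hcardℓ : ({p : PG F | PGIncident p ℓ}).ncard = q + 1 := by
        rw [← Nat.card_coe_set_eq]
        exact PGAux.card_points_on ℓ
      exact (Set.eq_of_subset_of_ncard_le hsub (by omega) S.toFinite).symm
    · exfalso
      obtain ⟨C, hCℓ, hCS⟩ := Set.not_subset.1 hsub
      have hP : ∀ m : {l : PG F // PGIncident C l}, ∃ p, p ∈ S ∧ p ≠ A ∧ PGIncident p m.1 := by
        rintro ⟨m, hCm⟩
        by_cases hmℓ : m = ℓ
        · subst hmℓ
          exact ⟨B, hB, Ne.symm hAB, hBℓ⟩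
        · obtain ⟨p, hpS, hpm⟩ := hmeet m
          refine ⟨p, hpS, ?_, hpm⟩
          rintro rfl
          have hAC : p ≠ C := fun h => hCS (h ▸ hpS)
          exact hmℓ (PGAux.unique_line hAC hpm hCm hAℓ hCℓ)
      let ψ : {l : PG F // PGIncident C l} → ↥(S \ {A}) := fun m =>
        ⟨(hP m).choose, by
          obtain ⟨h1, h2, h3⟩ := (hP m).choose_spec
          exact ⟨h1, by simpa using h2⟩⟩
      have hinj : Function.Injective ψ := by
        intro m₁ m₂ hψ
        obtain ⟨h11, h12, h13⟩ := (hP m₁).choose_spec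
        obtain ⟨h21, h22, h23⟩ := (hP m₂).choose_spec
        have hpe : (hP m₁).choose = (hP m₂).choose := congrArg Subtype.val hψ
        have hpC : (hP m₁).choose ≠ C := fun h => hCS (h ▸ h11)
        exact Subtype.ext (PGAux.unique_line hpC h13 m₁.2 (hpe ▸ h23) m₂.2)
      have hle := Nat.card_le_card_of_injective ψ hinj
      rw [PGAux.card_lines_through] at hle
      have hdiff : Nat.card ↥(S \ {A}) = q := by
        rw [Nat.card_coe_set_eq, Set.ncard_diff_singleton_of_mem hA]
        omega
      omega
  · rintro ⟨l₀, rfl⟩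
    unfold uIdx
    rw [Nat.card_eq_zero]
    refine Or.inl ⟨?_⟩
    rintro ⟨l, hl⟩
    have hne : Nonempty {p : PG F // p ∈ {p : PG F | PGIncident p l₀} ∧ PGIncident p l} := by
      rcases eq_or_ne l l₀ with rfl | hll
      · have hcard : Nat.card {p : PG F // PGIncident p l} = q + 1 := PGAux.card_points_on l
        have : Nonempty {p : PG F // PGIncident p l} := by
          by_contra hne
          rw [not_nonempty_iff] at hne
          rw [Nat.card_eq_zero.2 (Or.inl hne)] at hcard
          omega
        obtain ⟨p, hp⟩ := this
        exact ⟨⟨p, hp, hp⟩⟩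
      · obtain ⟨p, h1, h2⟩ := PGAux.exists_line hll
        exact ⟨⟨p, PGAux.incident_symm h2, PGAux.incident_symm h1⟩⟩
    rcases Nat.card_eq_zero.1 hl with hE | hI
    · exact hE.elim hne.some
    · exact not_infinite_iff_finite.2 inferInstance hI
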